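/- Let z ∈ I_μ, and suppose r is a real eigenvalue of A(z) admitting an eigenvector R with all coordinates positive, normalized so that Σ_{i∈K} R_i = 1. Then the two quantities r − 1 and Σ_{i∈K} R_i ρ_i(z) − 1 have the same sign, meaning they are both negative, both null, or both positive. -/

import Mathlib

open MeasureTheory Matrix Filter

noncomputable section

/-- The maximum of the support (within `[0,1]`) of a measure `μ` on `ℝ`:
`sup {x ∈ [0,1] : μ([x,1]) > 0}`. -/
def etaSup (μ : Measure ℝ) : ℝ :=
  sSup {x | x ∈ Set.Icc (0:ℝ) 1 ∧ 0 < μ (Set.Icc x 1)}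

/-- Membership in `I_μ`: `z ≥ 0` and `∑_{n≥0} z^n ∫ x^n β_j q_j(dx) < ∞` for every `j`. -/
def memIm (k : ℕ) (β : Fin k → ℝ) (q : Fin k → Measure ℝ) (z : ℝ) : Prop :=
  0 ≤ z ∧ ∀ j : Fin k,
    (∑' n : ℕ, ENNReal.ofReal (z ^ n) * ∫⁻ x, ENNReal.ofReal (x ^ n * β j) ∂(q j)) < ⊤

/-- The matrix `A(z)` with entries `A(z)_{i,j} = μ_j^{[i−j]}(z)`, where
`μ_j^i(z) = ∫ (zx)^i / (1 − (zx)^k) β_j q_j(dx)`. -/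
def Amat (k : ℕ) (β : Fin k → ℝ) (q : Fin k → Measure ℝ) (z : ℝ) :
    Matrix (Fin k) (Fin k) ℝ :=
  Matrix.of fun i j =>
    ∫ x, (z * x) ^ (((i - j : Fin k) : ℕ)) / (1 - (z * x) ^ k) * β j ∂(q j)

/-- `ρ_j(z) = ∫ β_j q_j(dx) / (1 − z x)`. -/
def rhoFun (k : ℕ) (β : Fin k → ℝ) (q : Fin k → Measure ℝ) (z : ℝ) (j : Fin k) : ℝ :=
  ∫ x, β j / (1 - z * x) ∂(q j)

theorem geomdiv (k : ℕ) [NeZero k] (y β : ℝ) (hy0 : 0 ≤ y) (hy1 : y < 1) :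
    (∑ m ∈ Finset.range k, y ^ m) / (1 - y ^ k) * β = β / (1 - y) := by
  have hyk : y ^ k < 1 := pow_lt_one₀ hy0 hy1 (NeZero.ne k)
  have h1 : (0:ℝ) < 1 - y ^ k := by linarith
  have h2 : (0:ℝ) < 1 - y := by linarith
  have hd : (y ^ k - 1) / (y - 1) = (1 - y ^ k) / (1 - y) := by
    rw [div_eq_div_iff (by linarith) (by linarith)]; ring
  rw [geom_sum_eq (by linarith), hd, div_div, mul_comm (1 - y) (1 - y ^ k), ← div_div,
    div_self h1.ne', one_div, inv_mul_eq_div]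

theorem ptbound (k : ℕ) [NeZero k] (y β : ℝ) (hy0 : 0 ≤ y) (hy1 : y < 1) (c : ℕ) (hc : c < k)
    (hβ : 0 ≤ β) :
    0 ≤ y ^ c / (1 - y ^ k) * β ∧ y ^ c / (1 - y ^ k) * β ≤ β / (1 - y) := by
  have hyk : y ^ k < 1 := pow_lt_one₀ hy0 hy1 (NeZero.ne k)
  have h1 : (0:ℝ) < 1 - y ^ k := by linarith
  have hle : y ^ c ≤ ∑ m ∈ Finset.range k, y ^ m :=
    Finset.single_le_sum (f := fun m => y ^ m) (fun m _ => pow_nonneg hy0 m) (Finset.mem_range.2 hc)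
  refine ⟨by positivity, ?_⟩
  calc y ^ c / (1 - y ^ k) * β ≤ (∑ m ∈ Finset.range k, y ^ m) / (1 - y ^ k) * β := by gcongr
    _ = β / (1 - y) := geomdiv k y β hy0 hy1

theorem ptsum (k : ℕ) [NeZero k] (j : Fin k) (y β : ℝ) (hy0 : 0 ≤ y) (hy1 : y < 1) :
    ∑ i : Fin k, y ^ (((i - j : Fin k) : ℕ)) / (1 - y ^ k) * β = β / (1 - y) := by
  have hre : ∑ i : Fin k, y ^ (((i - j : Fin k) : ℕ)) = ∑ m ∈ Finset.range k, y ^ m := by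
    rw [← Fin.sum_univ_eq_sum_range]
    exact Fintype.sum_equiv (Equiv.subRight j) _ _ (fun i => rfl)
  rw [← Finset.sum_mul, ← Finset.sum_div, hre, geomdiv k y β hy0 hy1]

/-- a.e. the variable lies in `[0,1]` and `z*x < 1`. -/
theorem ae_good (μ : Measure ℝ) [IsProbabilityMeasure μ]
    (hqc : μ (Set.Icc (0:ℝ) 1)ᶜ = 0) (z : ℝ) (hz0 : 0 ≤ z) (b : ℝ) (hb : 0 < b)
    (hfin : (∑' n : ℕ, ENNReal.ofReal (z ^ n) * ∫⁻ x, ENNReal.ofReal (x ^ n * b) ∂μ) < ⊤) :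
    ∀ᵐ x ∂μ, x ∈ Set.Icc (0:ℝ) 1 ∧ z * x < 1 := by
  have hae1 : ∀ᵐ x ∂μ, x ∈ Set.Icc (0:ℝ) 1 := by
    rw [ae_iff]
    exact hqc
  have hE : μ {x | x ∈ Set.Icc (0:ℝ) 1 ∧ 1 ≤ z * x} = 0 := by
    by_contra h
    set E := {x | x ∈ Set.Icc (0:ℝ) 1 ∧ 1 ≤ z * x} with hEdef
    obtain ⟨x0, hx0⟩ : E.Nonempty := nonempty_of_measure_ne_zero h
    have hzpos : 0 < z := by
      rcases hx0 with ⟨⟨_, hx1⟩, hzx⟩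
      nlinarith
    have hEmeas : MeasurableSet E :=
      (measurableSet_Icc).inter (measurableSet_le measurable_const (measurable_id.const_mul z))
    have hlow : ∀ n : ℕ, ENNReal.ofReal b * μ E ≤
        ENNReal.ofReal (z ^ n) * ∫⁻ x, ENNReal.ofReal (x ^ n * b) ∂μ := by
      intro n
      have hind : ∀ x, E.indicator (fun _ => ENNReal.ofReal (z⁻¹ ^ n * b)) x ≤
          ENNReal.ofReal (x ^ n * b) := by
        intro x
        by_cases hx : x ∈ E
        · rw [Set.indicator_of_mem hx]
          rcases hx with ⟨⟨hx0', hx1⟩, hzx⟩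
          have hxiz : z⁻¹ ≤ x := by
            rw [inv_le_iff_one_le_mul₀ hzpos]
            linarith [mul_comm z x]
          exact ENNReal.ofReal_le_ofReal (by
            have := pow_le_pow_left₀ (by positivity) hxiz n
            nlinarith [pow_nonneg (le_of_lt (by positivity : (0:ℝ) < z⁻¹)) n])
        · rw [Set.indicator_of_notMem hx]; exact zero_le
      have h2 : ENNReal.ofReal (z⁻¹ ^ n * b) * μ E ≤ ∫⁻ x, ENNReal.ofReal (x ^ n * b) ∂μ := by
        rw [← lintegral_indicator_const hEmeas]
        exact lintegral_mono hind
      calc ENNReal.ofReal b * μ E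
          = ENNReal.ofReal (z ^ n) * (ENNReal.ofReal (z⁻¹ ^ n * b) * μ E) := by
            rw [← mul_assoc, ← ENNReal.ofReal_mul (by positivity)]
            congr 2
            field_simp
            rw [one_div, ← mul_pow, mul_inv_cancel₀ hzpos.ne', one_pow]
        _ ≤ _ := by gcongr
    have htop : (∑' n : ℕ, ENNReal.ofReal (z ^ n) * ∫⁻ x, ENNReal.ofReal (x ^ n * b) ∂μ) = ⊤ := by
      refine top_le_iff.1 ?_
      calc (⊤ : ENNReal) = ∑' _ : ℕ, ENNReal.ofReal b * μ E := by
            rw [ENNReal.tsum_const_eq_top_of_ne_zero]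
            exact mul_ne_zero (by simp [hb, hb.le]) h
        _ ≤ _ := ENNReal.tsum_le_tsum hlow
    exact hfin.ne htop
  have hae2 : ∀ᵐ x ∂μ, ¬(x ∈ Set.Icc (0:ℝ) 1 ∧ 1 ≤ z * x) := by
    rw [ae_iff]
    simpa only [not_not] using hE
  filter_upwards [hae1, hae2] with x h1 h2
  exact ⟨h1, lt_of_not_ge fun hle => h2 ⟨h1, hle⟩⟩

theorem rho_integrable (μ : Measure ℝ) [IsProbabilityMeasure μ]
    (z : ℝ) (hz0 : 0 ≤ z) (b : ℝ) (hb : 0 < b)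
    (hgood : ∀ᵐ x ∂μ, x ∈ Set.Icc (0:ℝ) 1 ∧ z * x < 1)
    (hfin : (∑' n : ℕ, ENNReal.ofReal (z ^ n) * ∫⁻ x, ENNReal.ofReal (x ^ n * b) ∂μ) < ⊤) :
    Integrable (fun x => b / (1 - z * x)) μ := by
  have hmeas : Measurable fun x : ℝ => b / (1 - z * x) :=
    measurable_const.div (measurable_const.sub (measurable_id.const_mul z))
  have hlint : (∫⁻ x, ENNReal.ofReal (b / (1 - z * x)) ∂μ) < ⊤ := by
    have hstep : (∫⁻ x, ENNReal.ofReal (b / (1 - z * x)) ∂μ)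
        = ∫⁻ x, ∑' n : ℕ, ENNReal.ofReal (z ^ n * (x ^ n * b)) ∂μ := by
      refine lintegral_congr_ae ?_
      filter_upwards [hgood] with x hx
      obtain ⟨⟨hx0, hx1⟩, hzx⟩ := hx
      have hy0 : 0 ≤ z * x := mul_nonneg hz0 hx0
      have hsummable : Summable fun n : ℕ => (z * x) ^ n :=
        summable_geometric_of_lt_one hy0 hzx
      have htsum : ∑' n : ℕ, ((z * x) ^ n * b) = b / (1 - z * x) := by
        rw [tsum_mul_right, tsum_geometric_of_lt_one hy0 hzx, inv_mul_eq_div]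
      rw [← htsum, ENNReal.ofReal_tsum_of_nonneg
        (fun n => mul_nonneg (pow_nonneg hy0 n) hb.le) (hsummable.mul_right b)]
      congr 1
      ext n
      rw [mul_pow, mul_assoc]
    rw [hstep, lintegral_tsum (fun n =>
      (((measurable_id'.pow_const n).mul_const b).const_mul (z ^ n)).ennreal_ofReal.aemeasurable)]
    · refine lt_of_le_of_lt (le_of_eq ?_) hfin
      congr 1
      ext n
      have : ∀ x : ℝ, ENNReal.ofReal (z ^ n * (x ^ n * b))
          = ENNReal.ofReal (z ^ n) * ENNReal.ofReal (x ^ n * b) := fun x =>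
        ENNReal.ofReal_mul (pow_nonneg hz0 n)
      simp_rw [this]
      rw [lintegral_const_mul' _ _ ENNReal.ofReal_ne_top]
  refine ⟨hmeas.aestronglyMeasurable, ?_⟩
  rw [hasFiniteIntegral_iff_ofReal ?_]
  · exact hlint
  · filter_upwards [hgood] with x hx
    have : 0 < 1 - z * x := by linarith [hx.2]
    positivity

theorem entry_integrable (k : ℕ) [NeZero k] (μ : Measure ℝ) [IsProbabilityMeasure μ]
    (z : ℝ) (hz0 : 0 ≤ z) (b : ℝ) (hb : 0 < b) (c : ℕ) (hc : c < k)
    (hgood : ∀ᵐ x ∂μ, x ∈ Set.Icc (0:ℝ) 1 ∧ z * x < 1)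
    (hfin : (∑' n : ℕ, ENNReal.ofReal (z ^ n) * ∫⁻ x, ENNReal.ofReal (x ^ n * b) ∂μ) < ⊤) :
    Integrable (fun x => (z * x) ^ c / (1 - (z * x) ^ k) * b) μ := by
  have hmeas : Measurable fun x : ℝ => (z * x) ^ c / (1 - (z * x) ^ k) * b :=
    (((measurable_id'.const_mul z).pow_const c).div
      (measurable_const.sub ((measurable_id'.const_mul z).pow_const k))).mul_const b
  refine (rho_integrable μ z hz0 b hb hgood hfin).mono hmeas.aestronglyMeasurable ?_
  filter_upwards [hgood] with x hx
  obtain ⟨⟨hx0, hx1⟩, hzx⟩ := hx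
  have hy0 : 0 ≤ z * x := mul_nonneg hz0 hx0
  obtain ⟨hge, hle⟩ := ptbound k (z * x) b hy0 hzx c hc hb.le
  have hzx' : 0 < 1 - z * x := by linarith
  rw [Real.norm_eq_abs, Real.norm_eq_abs, abs_of_nonneg hge, abs_of_nonneg (by positivity)]
  exact hle

theorem colsum (k : ℕ) [NeZero k] (β : Fin k → ℝ) (q : Fin k → Measure ℝ)
    [∀ i, IsProbabilityMeasure (q i)]
    (hβ : ∀ i, β i ∈ Set.Ioo (0:ℝ) 1)
    (hq : ∀ i, q i (Set.Icc (0:ℝ) 1)ᶜ = 0)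
    (z : ℝ) (hz : memIm k β q z) (j : Fin k) :
    ∑ i : Fin k, Amat k β q z i j = rhoFun k β q z j := by
  obtain ⟨hz0, hfin⟩ := hz
  have hgood := ae_good (q j) (hq j) z hz0 (β j) (hβ j).1 (hfin j)
  have hint : ∀ i : Fin k, Integrable
      (fun x => (z * x) ^ (((i - j : Fin k) : ℕ)) / (1 - (z * x) ^ k) * β j) (q j) :=
    fun i => entry_integrable k (q j) z hz0 (β j) (hβ j).1 _ (Fin.is_lt _) hgood (hfin j)
  show ∑ i : Fin k, ∫ x, (z * x) ^ (((i - j : Fin k) : ℕ)) / (1 - (z * x) ^ k) * β j ∂(q j)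
      = ∫ x, β j / (1 - z * x) ∂(q j)
  rw [← integral_finset_sum Finset.univ (fun i _ => hint i)]
  refine integral_congr_ae ?_
  filter_upwards [hgood] with x hx
  exact ptsum k j (z * x) (β j) (mul_nonneg hz0 hx.1.1) hx.2

theorem stmt_7 (k : ℕ) [NeZero k] (β : Fin k → ℝ) (q : Fin k → Measure ℝ)
    [∀ i, IsProbabilityMeasure (q i)]
    (hβ : ∀ i, β i ∈ Set.Ioo (0:ℝ) 1)
    (hq : ∀ i, q i (Set.Icc (0:ℝ) 1)ᶜ = 0)
    (hηq : ∀ i, 0 < etaSup (q i))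
    (z : ℝ) (hz : memIm k β q z)
    (r : ℝ) (R : Fin k → ℝ) (hR : ∀ i, 0 < R i) (hnorm : ∑ i, R i = 1)
    (heig : (Amat k β q z).mulVec R = r • R) :
    (r - 1 < 0 ↔ (∑ i, R i * rhoFun k β q z i) - 1 < 0) ∧
    (r - 1 = 0 ↔ (∑ i, R i * rhoFun k β q z i) - 1 = 0) ∧
    (0 < r - 1 ↔ 0 < (∑ i, R i * rhoFun k β q z i) - 1) := by
  have hr : r = ∑ i, R i * rhoFun k β q z i := by
    have h1 : ∑ i, ((Amat k β q z).mulVec R) i = r := by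
      rw [heig]
      simp only [Pi.smul_apply, smul_eq_mul, ← Finset.mul_sum, hnorm, mul_one]
    calc r = ∑ i, ((Amat k β q z).mulVec R) i := h1.symm
      _ = ∑ i, ∑ j, Amat k β q z i j * R j := by
          simp [Matrix.mulVec, dotProduct]
      _ = ∑ j, (∑ i, Amat k β q z i j) * R j := by
          rw [Finset.sum_comm]
          simp [Finset.sum_mul]
      _ = ∑ j, R j * rhoFun k β q z j := by
          refine Finset.sum_congr rfl fun j _ => ?_
          rw [colsum k β q hβ hq z hz j, mul_comm]
  rw [hr]
  exact ⟨Iff.rfl, Iff.rfl, Iff.rfl⟩
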